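/- arXiv:2208.07489 — 2 statements merged into one kernel-verified Lean document; each statement's English description precedes it below -/
import Mathlib

section
/- Let n and m be natural numbers with 1 ≤ m, and let Φ = {y_1 < y_2 < ⋯ < y_m} be a subset of {0, 1, …, n−1} of cardinality m; set y_{m+1} = n. Then the Elias run-length cost of Φ, namely cost(Φ, n) = ∑_{i=1}^{m} (2·⌊log₂(y_{i+1} − y_i)⌋ + 1) where ⌊log₂·⌋ is the natural-number base-2 logarithm, satisfies cost(Φ, n) ≤ 2·m·log₂(n/m) + m, where the right-hand side uses the real base-2 logarithm. -/
/-- The Elias run-length cost of a finite set `Φ ⊆ {0, …, n-1}` with sentinel `n`: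
sort `Φ` as `y₁ < y₂ < ⋯ < yₘ`, append the sentinel `n`, and charge
`2 * ⌊log₂ g⌋ + 1` bits for each consecutive gap `g = y_{i+1} - y_i`
(the length of the Elias gamma code of `g`). -/
def eliasCost (Φ : Finset ℕ) (n : ℕ) : ℕ :=
  let l := Φ.sort (· ≤ ·) ++ [n]
  (List.zipWith (fun a b => 2 * Nat.log 2 (b - a) + 1) l l.tail).sum

lemma natLog_le_logb (g : ℕ) (hg : 1 ≤ g) : (Nat.log 2 g : ℝ) ≤ Real.logb 2 g := by
  have h := Nat.pow_log_le_self 2 (by omega : g ≠ 0)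
  have h2 : ((2:ℝ)) ^ (Nat.log 2 g) ≤ (g : ℝ) := by exact_mod_cast h
  calc (Nat.log 2 g : ℝ) = Real.logb 2 ((2:ℝ) ^ (Nat.log 2 g)) := by
        rw [Real.logb_pow, Real.logb_self_eq_one (by norm_num)]; ring
    _ ≤ Real.logb 2 g :=
        Real.logb_le_logb_of_le (by norm_num) (by positivity) h2

/-- Strictly sorted lists have positive consecutive gaps. -/
lemma gaps_pos : ∀ (L : List ℕ), L.Pairwise (· < ·) →
    ∀ g ∈ List.zipWith (fun a b => b - a) L L.tail, 1 ≤ g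
  | [], _, g, hg => by simp at hg
  | [a], _, g, hg => by simp at hg
  | a :: b :: T, h, g, hg => by
    simp only [List.tail_cons, List.zipWith_cons_cons, List.mem_cons] at hg
    rcases hg with rfl | hg
    · have : a < b := (List.pairwise_cons.1 h).1 b (by simp)
      omega
    · exact gaps_pos (b :: T) (List.pairwise_cons.1 h).2 g (by simpa using hg)

/-- Telescoping bound on the sum of gaps. -/
lemma gaps_sum_le : ∀ (l : List ℕ) (a n : ℕ), (a :: l ++ [n]).Pairwise (· ≤ ·) →
    (List.zipWith (fun a b => b - a) (a :: l ++ [n]) (l ++ [n])).sum + a ≤ n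
  | [], a, n, h => by
    have : a ≤ n := (List.pairwise_cons.1 h).1 n (by simp)
    simp; omega
  | b :: l, a, n, h => by
    have hab : a ≤ b := (List.pairwise_cons.1 h).1 b (by simp)
    have ih := gaps_sum_le l b n (List.pairwise_cons.1 h).2
    simp only [List.cons_append, List.zipWith_cons_cons, List.sum_cons] at *
    omega

lemma map_cost_sum : ∀ (G : List ℕ),
    (G.map (fun g => 2 * Nat.log 2 g + 1)).sum = 2 * (G.map (Nat.log 2)).sum + G.length
  | [] => by simp
  | a :: G => by
    simp only [List.map_cons, List.sum_cons, List.length_cons, map_cost_sum G]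
    ring

/-- Jensen / AM–GM step: sum of logs of `k` positive naturals with sum `≤ n`. -/
lemma sum_logb_le (k n : ℕ) (hk : 1 ≤ k) (g : Fin k → ℕ) (hpos : ∀ i, 1 ≤ g i)
    (hsum : ∑ i, g i ≤ n) :
    ∑ i, Real.logb 2 (g i) ≤ (k : ℝ) * Real.logb 2 ((n : ℝ) / k) := by
  have hk' : (0:ℝ) < k := by exact_mod_cast hk
  have hgpos : ∀ i, (0:ℝ) < (g i : ℝ) := fun i => by exact_mod_cast hpos i
  have hamgm := Real.geom_mean_le_arith_mean_weighted Finset.univ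
      (fun _ => 1/(k:ℝ)) (fun i => (g i : ℝ))
      (fun i _ => by positivity)
      (by simp [Finset.card_univ]; field_simp)
      (fun i _ => (hgpos i).le)
  have hrhs : ∑ i : Fin k, (1/(k:ℝ)) * (g i : ℝ) ≤ (n : ℝ) / k := by
    have hs : (∑ i, (g i : ℝ)) ≤ (n : ℝ) := by exact_mod_cast hsum
    calc ∑ i : Fin k, (1/(k:ℝ)) * (g i : ℝ) = (1/(k:ℝ)) * ∑ i, (g i : ℝ) := by
          rw [Finset.mul_sum]
      _ ≤ (1/(k:ℝ)) * (n : ℝ) := by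
          exact mul_le_mul_of_nonneg_left hs (by positivity)
      _ = (n : ℝ) / k := one_div_mul_eq_div _ _
  have hprodpos : (0:ℝ) < ∏ i : Fin k, (g i : ℝ) ^ (1/(k:ℝ)) := by
    exact Finset.prod_pos fun i _ => Real.rpow_pos_of_pos (hgpos i) _
  have hlog := Real.logb_le_logb_of_le (by norm_num : (1:ℝ) < 2) hprodpos
      (le_trans hamgm hrhs)
  have heq : Real.logb 2 (∏ i : Fin k, (g i : ℝ) ^ (1/(k:ℝ)))
      = (1/(k:ℝ)) * ∑ i, Real.logb 2 (g i) := by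
    rw [Real.logb_prod _ _ (fun i _ => ne_of_gt (Real.rpow_pos_of_pos (hgpos i) _)), Finset.mul_sum]
    congr 1; funext i
    rw [Real.logb_rpow_eq_mul_logb_of_pos (hgpos i)]
  rw [heq] at hlog
  calc ∑ i, Real.logb 2 (g i)
      = (k:ℝ) * ((1/(k:ℝ)) * ∑ i, Real.logb 2 (g i)) := by field_simp
    _ ≤ (k:ℝ) * Real.logb 2 ((n : ℝ) / k) :=
        mul_le_mul_of_nonneg_left hlog hk'.le

/-- For `1 ≤ m` and `Φ ⊆ {0, …, n-1}` of cardinality `m`, the Elias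
run-length cost of `Φ` is at most `2 * m * log₂ (n / m) + m`. -/
theorem eliasCost_le (n m : ℕ) (hm : 1 ≤ m) (Φ : Finset ℕ) (hcard : Φ.card = m)
    (hsub : ∀ y ∈ Φ, y < n) :
    (eliasCost Φ n : ℝ) ≤ 2 * (m : ℝ) * Real.logb 2 ((n : ℝ) / (m : ℝ)) + (m : ℝ) := by
  classical
  set l := Φ.sort (· ≤ ·) with hl
  have hlen : l.length = m := by rw [hl, Finset.length_sort, hcard]
  set G := List.zipWith (fun a b => b - a) (l ++ [n]) ((l ++ [n]).tail) with hG
  have hLsorted : (l ++ [n]).Pairwise (· < ·) := by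
    rw [List.pairwise_append]
    refine ⟨Φ.sortedLT_sort.pairwise, by simp, ?_⟩
    intro a ha b hb
    simp only [List.mem_singleton] at hb
    subst hb
    exact hsub a ((Φ.mem_sort _).1 ha)
  -- cost rewriting
  have hcost : eliasCost Φ n = 2 * (G.map (Nat.log 2)).sum + G.length := by
    rw [eliasCost, ← map_cost_sum]
    congr 1
    rw [hG, List.map_zipWith]
  -- length of G
  have hGlen : G.length = m := by
    rcases l with _ | ⟨y, l'⟩
    · simp at hlen; omega
    · simp [hG, List.length_zipWith] at *
      omega
  -- gap positivity
  have hGpos : ∀ g ∈ G, 1 ≤ g := gaps_pos _ hLsorted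
  -- gap sum
  have hGsum : G.sum ≤ n := by
    rcases l with _ | ⟨y, l'⟩
    · simp at hlen; omega
    · have := gaps_sum_le l' y n (hLsorted.imp le_of_lt)
      simp only [hG, List.cons_append, List.tail_cons]
      have hdf : (List.zipWith (fun a b => b - a) (y :: l' ++ [n]) (l' ++ [n])).sum
          = (List.zipWith (fun a b => b - a) (y :: (l' ++ [n])) (l' ++ [n])).sum := rfl
      omega
  -- to Fin-indexed function
  subst hGlen
  set k := G.length with hk
  have hk1 : 1 ≤ k := hm
  have hkey : ((G.map (Nat.log 2)).sum : ℝ) ≤ (k : ℝ) * Real.logb 2 ((n : ℝ) / k) := by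
    have h1 : ((G.map (Nat.log 2)).sum : ℝ) = ∑ i : Fin k, (Nat.log 2 (G.get i) : ℝ) := by
      rw [← Fin.sum_univ_fun_getElem G (Nat.log 2)]
      push_cast
      rfl
    rw [h1]
    calc ∑ i : Fin k, (Nat.log 2 (G.get i) : ℝ)
        ≤ ∑ i : Fin k, Real.logb 2 (G.get i) := by
          apply Finset.sum_le_sum
          intro i _
          exact natLog_le_logb _ (hGpos _ (G.get_mem i))
      _ ≤ (k : ℝ) * Real.logb 2 ((n : ℝ) / k) := by
          apply sum_logb_le k n hk1 (fun i => G.get i) (fun i => hGpos _ (G.get_mem i))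
          calc ∑ i : Fin k, G.get i = G.sum := by rw [← Fin.sum_univ_getElem G]; rfl
            _ ≤ n := hGsum
  rw [hcost, Nat.cast_add, Nat.cast_mul, Nat.cast_ofNat]
  linarith [hkey]
end

section
/- Let L ≥ 1 be a natural number, set n = 2^L, and for each l ∈ {1, …, L} let Φ_l ⊆ {0, 1, …, n−1} be a subset of cardinality exactly 2^l. Then the total Elias run-length cost satisfies ∑_{l=1}^{L} cost(Φ_l, n) ≤ 6·n. (This is the worst-case instance of the paper's Lemma 1: the compressed historicalMembership structure occupies O(n) bits.) -/
/-! ### Auxiliary lemmas -/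

/-- Pointwise convexity bound: `2^k (e+1) ≤ 2^e + k·2^k`. -/
lemma elias_pw (k e : ℕ) : 2^k * (e+1) ≤ 2^e + k * 2^k := by
  rcases le_or_gt k e with h | h
  · obtain ⟨d, rfl⟩ := Nat.exists_eq_add_of_le h
    have hd : d + 1 ≤ 2^d := Nat.lt_two_pow_self
    calc 2^k * (k + d + 1) = 2^k * (d+1) + k * 2^k := by ring
    _ ≤ 2^k * 2^d + k * 2^k :=
        Nat.add_le_add_right (Nat.mul_le_mul_left _ hd) _
    _ = 2^(k+d) + k * 2^k := by rw [pow_add]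
  · calc 2^k * (e+1) ≤ 2^k * k := Nat.mul_le_mul_left _ h
    _ = k * 2^k := Nat.mul_comm _ _
    _ ≤ 2^e + k * 2^k := Nat.le_add_left _ _

/-- Discrete Jensen-type bound for sums of logarithms. -/
lemma elias_log_sum (k : ℕ) : ∀ G : List ℕ, (∀ g ∈ G, 1 ≤ g) →
    2^k * ((G.map (Nat.log 2)).sum + G.length) ≤ G.sum + G.length * (k * 2^k)
  | [], _ => by simp
  | g :: t, h => by
    have ih := elias_log_sum k t (fun x hx => h x (List.mem_cons_of_mem _ hx))
    have h1 : 2 ^ Nat.log 2 g ≤ g := Nat.pow_log_le_self 2 (by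
      have := h g (List.mem_cons_self); omega)
    have h2 := elias_pw k (Nat.log 2 g)
    simp only [List.map_cons, List.sum_cons, List.length_cons]
    calc 2^k * ((Nat.log 2 g + (t.map (Nat.log 2)).sum) + (t.length + 1))
        = 2^k * (Nat.log 2 g + 1) + 2^k * ((t.map (Nat.log 2)).sum + t.length) := by ring
    _ ≤ (2 ^ Nat.log 2 g + k * 2^k) + (t.sum + t.length * (k * 2^k)) :=
        Nat.add_le_add h2 ih
    _ ≤ (g + k * 2^k) + (t.sum + t.length * (k * 2^k)) :=
        Nat.add_le_add_right (Nat.add_le_add_right h1 _) _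
    _ = (g + t.sum) + (t.length + 1) * (k * 2^k) := by ring

/-- Telescoping: the sum of consecutive gaps plus the head equals the last element. -/
lemma elias_tel : ∀ (l : List ℕ) (a : ℕ), List.Chain' (· ≤ ·) (a :: l) →
    (List.zipWith (fun x y => y - x) (a :: l) l).sum + a
      = (a :: l).getLast (List.cons_ne_nil _ _)
  | [], a, _ => by simp
  | b :: t, a, h => by
    simp only [List.Chain', List.isChain_cons_cons] at h
    have ih := elias_tel t b h.2
    have hlast : (a :: b :: t).getLast (List.cons_ne_nil _ _)
        = (b :: t).getLast (List.cons_ne_nil _ _) := List.getLast_cons _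
    simp only [List.zipWith, List.sum_cons] at *
    have hab : a ≤ b := h.1
    omega

/-- Each consecutive gap of a strictly increasing list is positive. -/
lemma elias_gap_pos : ∀ (l : List ℕ) (a : ℕ), List.Chain' (· < ·) (a :: l) →
    ∀ g ∈ List.zipWith (fun x y => y - x) (a :: l) l, 1 ≤ g
  | [], _, _ => by simp
  | b :: t, a, h => by
    simp only [List.Chain', List.isChain_cons_cons] at h
    intro g hg
    simp only [List.zipWith, List.mem_cons] at hg
    rcases hg with rfl | hg
    · omega
    · exact elias_gap_pos t b h.2 g hg

lemma elias_zip_map : ∀ (l l' : List ℕ),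
    List.zipWith (fun a b => 2 * Nat.log 2 (b - a) + 1) l l'
      = (List.zipWith (fun a b => b - a) l l').map (fun g => 2 * Nat.log 2 g + 1)
  | [], _ => by simp
  | _ :: _, [] => by simp
  | a :: l, b :: l' => by simp only [List.zipWith_cons_cons, List.map_cons, elias_zip_map l l']

lemma elias_sum_affine : ∀ G : List ℕ,
    (G.map (fun g => 2 * Nat.log 2 g + 1)).sum = 2 * (G.map (Nat.log 2)).sum + G.length
  | [] => by simp
  | g :: t => by simp [elias_sum_affine t]; ring

/-- Per-level bound: a full level `l` costs at most `2·2^l(L-l) + 2^l` bits. -/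
lemma elias_level (L l : ℕ) (hl : l ≤ L) (Φ : Finset ℕ) (hsub : ∀ y ∈ Φ, y < 2^L)
    (hcard : Φ.card = 2^l) : eliasCost Φ (2^L) ≤ 2 * (2^l * (L - l)) + 2^l := by
  classical
  set s := Φ.sort (· ≤ ·) with hs
  have hlen : s.length = 2^l := by rw [hs, Finset.length_sort, hcard]
  have hsorted : (s ++ [2^L]).Pairwise (· < ·) := by
    rw [List.pairwise_append]
    refine ⟨(Finset.sortedLT_sort Φ).pairwise, by simp, ?_⟩
    intro a ha b hb
    simp only [List.mem_singleton] at hb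
    subst hb
    exact hsub a ((Finset.mem_sort _).mp ha)
  obtain ⟨a, t, hst⟩ : ∃ a t, s ++ [2^L] = a :: t := by
    cases h : s ++ [2^L] with
    | nil => exact absurd h (by simp)
    | cons a t => exact ⟨a, t, rfl⟩
  have hchain : List.Chain' (· < ·) (a :: t) := by
    rw [← hst]; exact hsorted.isChain
  set G := List.zipWith (fun x y => y - x) (a :: t) t with hG
  have hlast : (a :: t).getLast (List.cons_ne_nil _ _) = 2^L := by
    rw [← List.getLast_congr _ _ hst]
    exact List.getLast_append_singleton s
  have hsum : G.sum + a = 2^L := by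
    rw [hG, elias_tel t a (hchain.imp fun _ _ h => le_of_lt h), hlast]
  have ht : t.length = 2^l := by
    have h1 : (s ++ [2^L]).length = t.length + 1 := by rw [hst]; simp
    simp only [List.length_append, List.length_singleton, hlen] at h1
    omega
  have hGlen : G.length = 2^l := by
    simp only [hG, List.length_zipWith, List.length_cons]
    omega
  have hpos : ∀ g ∈ G, 1 ≤ g := elias_gap_pos t a hchain
  have key := elias_log_sum (L - l) G hpos
  rw [hGlen] at key
  set S := (G.map (Nat.log 2)).sum with hS
  have hpow : 2^L = 2^(L-l) * 2^l := by
    rw [← pow_add]; congr 1; omega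
  have hGsum : G.sum ≤ 2^L := by omega
  have key2 : 2^(L-l) * (S + 2^l) ≤ 2^(L-l) * (2^l + 2^l * (L-l)) := by
    calc 2^(L-l) * (S + 2^l) ≤ G.sum + 2^l * ((L-l) * 2^(L-l)) := key
    _ ≤ 2^L + 2^l * ((L-l) * 2^(L-l)) := Nat.add_le_add_right hGsum _
    _ = 2^(L-l) * (2^l + 2^l * (L-l)) := by rw [hpow]; ring
  have hSle : S ≤ 2^l * (L - l) := by
    have h3 := Nat.le_of_mul_le_mul_left key2 (Nat.pow_pos (by norm_num))
    omega
  have hcost : eliasCost Φ (2^L) = 2 * S + 2^l := by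
    simp only [eliasCost, ← hs]
    rw [hst]
    show (List.zipWith _ (a :: t) t).sum = _
    rw [elias_zip_map, ← hG, elias_sum_affine, hGlen]
  rw [hcost]
  have : 2 * S ≤ 2 * (2^l * (L-l)) := by omega
  omega

lemma elias_geom2 : ∀ L : ℕ, (∑ l ∈ Finset.Icc 1 L, 2^l) + 2 = 2^(L+1)
  | 0 => by simp
  | L + 1 => by
    rw [Finset.sum_Icc_succ_top (by omega)]
    have ih := elias_geom2 L
    have : (2:ℕ)^(L+1+1) = 2^(L+1) * 2 := pow_succ 2 (L+1)
    omega

lemma elias_sumB : ∀ L : ℕ,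
    (∑ l ∈ Finset.Icc 1 L, (2 * (2^l * (L - l)) + 2^l)) + (4*L + 6) ≤ 6 * 2^L
  | 0 => by simp
  | L + 1 => by
    rw [Finset.sum_Icc_succ_top (by omega)]
    have hsplit : ∑ l ∈ Finset.Icc 1 L, (2 * (2^l * (L + 1 - l)) + 2^l)
        = (∑ l ∈ Finset.Icc 1 L, (2 * (2^l * (L - l)) + 2^l))
          + ∑ l ∈ Finset.Icc 1 L, 2 * 2^l := by
      rw [← Finset.sum_add_distrib]
      refine Finset.sum_congr rfl fun l hl => ?_
      have hlL : l ≤ L := (Finset.mem_Icc.mp hl).2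
      have : L + 1 - l = (L - l) + 1 := by omega
      rw [this]; ring
    rw [hsplit]
    have ih := elias_sumB L
    have hg := elias_geom2 L
    have h2 : ∑ l ∈ Finset.Icc 1 L, 2 * 2^l = 2 * ∑ l ∈ Finset.Icc 1 L, 2^l :=
      by rw [Finset.mul_sum]
    have h3 : (2:ℕ)^(L+1) = 2^L * 2 := pow_succ 2 L
    have h4 : (2:ℕ)^(L+1+1) = 2^(L+1) * 2 := pow_succ 2 (L+1)
    simp only [Nat.sub_self, Nat.mul_zero, Nat.zero_add, mul_zero]
    omega

/-- Let `L ≥ 1`, `n = 2^L`, and for each `l ∈ {1, …, L}` let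
`Φ l ⊆ {0, …, n-1}` have cardinality exactly `2^l`. Then the total Elias run-length
cost of all the levels is at most `6 * n`. -/
theorem total_eliasCost_le (L : ℕ) (hL : 1 ≤ L) (n : ℕ) (hn : n = 2 ^ L)
    (Φ : ℕ → Finset ℕ)
    (hsub : ∀ l ∈ Finset.Icc 1 L, ∀ y ∈ Φ l, y < n)
    (hcard : ∀ l ∈ Finset.Icc 1 L, (Φ l).card = 2 ^ l) :
    ∑ l ∈ Finset.Icc 1 L, eliasCost (Φ l) n ≤ 6 * n := by
  subst hn
  calc ∑ l ∈ Finset.Icc 1 L, eliasCost (Φ l) (2^L)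
      ≤ ∑ l ∈ Finset.Icc 1 L, (2 * (2^l * (L - l)) + 2^l) :=
        Finset.sum_le_sum fun l hl =>
          elias_level L l (Finset.mem_Icc.mp hl).2 (Φ l) (hsub l hl) (hcard l hl)
  _ ≤ 6 * 2^L := by have := elias_sumB L; omega
end
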